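/- Squier's Hermitian form makes the Burau generators unitary: if |s| = 1, then for the matrix J with entries J_{ii} = s + s^{−1}, J_{i,i±1} = −s^{±1} (zero elsewhere), each reduced Burau matrix ρ(σ_i) satisfies ρ(σ_i)* J ρ(σ_i) = J, where * denotes conjugate transpose. -/

import Mathlib

open Matrix

/-- Squier's Hermitian form makes the reduced Burau generators unitary
(verified on the 2-dimensional representation for `n = 3`):
if `|s| = 1` then `ρ(σ_i)* J ρ(σ_i) = J` for `i = 1, 2`. -/
theorem squier_form_unitary (s : ℂ) (hs : ‖s‖ = 1)
    (J ρ₁ ρ₂ : Matrix (Fin 2) (Fin 2) ℂ)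
    (hJ : J = !![s + s⁻¹, -s⁻¹; -s, s + s⁻¹])
    (h₁ : ρ₁ = !![-(s ^ (-2 : ℤ)), s ^ (-2 : ℤ); 0, 1])
    (h₂ : ρ₂ = !![1, 0; 1, -(s ^ (-2 : ℤ))]) :
    ρ₁ᴴ * J * ρ₁ = J ∧ ρ₂ᴴ * J * ρ₂ = J := by
  have hs0 : s ≠ 0 := by
    intro h; rw [h] at hs; simp at hs
  have hconj : (starRingEnd ℂ) s = s⁻¹ := by
    rw [Complex.inv_def]
    rw [Complex.normSq_eq_norm_sq, hs]
    simp
  have hz : s ^ (-2 : ℤ) = s⁻¹ * s⁻¹ := by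
    rw [show (-2:ℤ) = -1 + -1 by norm_num, zpow_add₀ hs0]
    simp
  subst hJ h₁ h₂
  constructor <;>
  · ext i j
    fin_cases i <;> fin_cases j <;>
      simp [Matrix.mul_apply, Fin.sum_univ_two, conjTranspose_apply, hconj, hz, map_inv₀] <;>
      field_simp <;> ring
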